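/- As formal power series in q, the generating function identity Σ_{n≥0} σ_d mex(n) q^n = (−q; q)_∞ · Σ_{m≥0} q^{m(m+1)/2} / (−q; q)_m holds, i.e., the generating function of σ_d mex(n) equals the product of the generating function for partitions into distinct parts and Ramanujan's σ(q). -/

import Mathlib

open PowerSeries Finset

/-- The set of partitions of `n` into distinct parts, encoded as finsets of
positive integers summing to `n`. -/
def Dpart (n : ℕ) : Finset (Finset ℕ) :=
  (Finset.Icc 1 n).powerset.filter (fun S => S.sum id = n)

/-- The minimal excludant: the least positive integer not occurring as a part. -/
noncomputable def pmex (S : Finset ℕ) : ℕ := sInf {m : ℕ | 0 < m ∧ m ∉ S}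

/-- The sum of minimal excludants over all distinct-parts partitions of `n`. -/
noncomputable def sigmadmex (n : ℕ) : ℕ := ∑ S ∈ Dpart n, pmex S

/-- `(−q;q)_∞ = Π_{k ≥ 1} (1 + q^k)` as a formal power series over `ℚ`: its `n`-th
coefficient only involves the factors with `k ≤ n`. -/
noncomputable def prodDistinct : PowerSeries ℚ :=
  PowerSeries.mk fun n =>
    coeff n (∏ k ∈ Finset.range (n + 1), (1 + (X : PowerSeries ℚ) ^ (k + 1)))

/-- Ramanujan's `σ(q) = Σ_{m ≥ 0} q^{m(m+1)/2} / (−q;q)_m`: the term of index `m` has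
order at least `m`, so the `n`-th coefficient only involves terms with `m ≤ n + 1`. -/
noncomputable def ramanujanSigma : PowerSeries ℚ :=
  PowerSeries.mk fun n =>
    coeff n (∑ m ∈ Finset.range (n + 2),
      (X : PowerSeries ℚ) ^ (m * (m + 1) / 2) *
        (∏ k ∈ Finset.range m, (1 + (X : PowerSeries ℚ) ^ (k + 1)))⁻¹)

namespace Aux4

/-- Partial products. -/
noncomputable def P (N : ℕ) : PowerSeries ℚ :=
  ∏ k ∈ Finset.range N, (1 + (X : PowerSeries ℚ) ^ (k + 1))

lemma constP (N : ℕ) : constantCoeff (P N) = 1 := by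
  simp [P, map_prod]

lemma m_le_tri (m : ℕ) : m ≤ m * (m + 1) / 2 := by
  have h : m * 2 ≤ m * (m + 1) := by
    rcases Nat.eq_zero_or_pos m with h | h
    · simp [h]
    · exact Nat.mul_le_mul_left m (by omega)
  calc m = m * 2 / 2 := by rw [Nat.mul_div_cancel m (by norm_num)]
    _ ≤ m * (m + 1) / 2 := Nat.div_le_div_right h

lemma sum_Icc_one (m : ℕ) : (∑ x ∈ Finset.Icc 1 m, x) = m * (m + 1) / 2 := by
  have h : (∑ x ∈ Finset.Icc 1 m, x) * 2 = m * (m + 1) := by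
    induction m with
    | zero => simp
    | succ m ih =>
      rw [Finset.sum_Icc_succ_top (by omega), add_mul, ih]
      ring
  omega

/-- Key coefficient formula via subset expansion. -/
lemma coeff_X_pow_mul_prod (a n : ℕ) (s : Finset ℕ) :
    coeff n ((X : PowerSeries ℚ) ^ a * ∏ k ∈ s, (1 + (X : PowerSeries ℚ) ^ (k + 1)))
      = ((s.powerset.filter fun T => a + ∑ k ∈ T, (k + 1) = n).card : ℚ) := by
  have hprod : (∏ k ∈ s, (1 + (X : PowerSeries ℚ) ^ (k + 1)))
      = ∑ T ∈ s.powerset, (X : PowerSeries ℚ) ^ (∑ k ∈ T, (k + 1)) := by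
    calc (∏ k ∈ s, (1 + (X : PowerSeries ℚ) ^ (k + 1)))
        = ∏ k ∈ s, ((X : PowerSeries ℚ) ^ (k + 1) + 1) := by
          exact Finset.prod_congr rfl fun k _ => add_comm _ _
      _ = ∑ T ∈ s.powerset, (∏ k ∈ T, (X : PowerSeries ℚ) ^ (k + 1)) * ∏ k ∈ s \ T, 1 :=
          Finset.prod_add _ _ _
      _ = ∑ T ∈ s.powerset, (X : PowerSeries ℚ) ^ (∑ k ∈ T, (k + 1)) := by
          refine Finset.sum_congr rfl fun T _ => ?_
          rw [Finset.prod_const_one, mul_one, Finset.prod_pow_eq_pow_sum]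
  rw [hprod, Finset.mul_sum, map_sum]
  rw [Finset.card_filter]
  push_cast
  refine Finset.sum_congr rfl fun T _ => ?_
  rw [← pow_add, PowerSeries.coeff_X_pow]
  simp [eq_comm]

lemma coeffP (N i : ℕ) :
    coeff i (P N)
      = (((Finset.range N).powerset.filter fun T => (∑ k ∈ T, (k + 1)) = i).card : ℚ) := by
  have := coeff_X_pow_mul_prod 0 i (Finset.range N)
  simpa [P] using this

lemma filter_stable {i N M : ℕ} (hN : i ≤ N) (hM : i ≤ M) :
    ((Finset.range N).powerset.filter fun T => (∑ k ∈ T, (k + 1)) = i)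
      = ((Finset.range M).powerset.filter fun T => (∑ k ∈ T, (k + 1)) = i) := by
  have key : ∀ N' M' : ℕ, i ≤ M' →
      ((Finset.range N').powerset.filter fun T => (∑ k ∈ T, (k + 1)) = i)
        ⊆ ((Finset.range M').powerset.filter fun T => (∑ k ∈ T, (k + 1)) = i) := by
    intro N' M' hM' T hT
    rw [Finset.mem_filter, Finset.mem_powerset] at hT ⊢
    refine ⟨fun k hk => ?_, hT.2⟩
    have : k + 1 ≤ ∑ k ∈ T, (k + 1) :=
      Finset.single_le_sum (f := fun k => k + 1) (fun _ _ => Nat.zero_le _) hk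
    rw [hT.2] at this
    exact Finset.mem_range.2 (by omega)
  exact Finset.Subset.antisymm (key N M hM) (key M N hN)

lemma coeffP_stable {i N M : ℕ} (hN : i ≤ N) (hM : i ≤ M) :
    coeff i (P N) = coeff i (P M) := by
  rw [coeffP, coeffP, filter_stable hN hM]




noncomputable def Sser (M : ℕ) : PowerSeries ℚ :=
  ∑ m ∈ Finset.range M, (X : PowerSeries ℚ) ^ (m * (m + 1) / 2) * (P m)⁻¹

lemma coeff_prodDistinct (i N : ℕ) (hN : i ≤ N) :
    coeff i prodDistinct = coeff i (P N) := by
  rw [prodDistinct, coeff_mk, ← P, coeffP_stable (by omega) hN]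

lemma coeff_term_zero {j m : ℕ} (h : j < m) :
    coeff j ((X : PowerSeries ℚ) ^ (m * (m + 1) / 2) * (P m)⁻¹) = 0 := by
  rw [mul_comm, PowerSeries.coeff_mul_X_pow']
  have := m_le_tri m
  rw [if_neg (by omega)]

lemma coeff_Sser_stable {j M M' : ℕ} (hM : j + 2 ≤ M) (hM' : j + 2 ≤ M') :
    coeff j (Sser M) = coeff j (Sser M') := by
  have key : ∀ M'' : ℕ, j + 2 ≤ M'' → coeff j (Sser M'') = coeff j (Sser (j + 2)) := by
    intro M'' h
    rw [Sser, Sser, ← Finset.sum_range_add_sum_Ico _ h, map_add, map_sum, map_sum]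
    have : ∀ m ∈ Finset.Ico (j + 2) M'',
        coeff j ((X : PowerSeries ℚ) ^ (m * (m + 1) / 2) * (P m)⁻¹) = 0 := by
      intro m hm
      rw [Finset.mem_Ico] at hm
      exact coeff_term_zero (by omega)
    rw [Finset.sum_eq_zero this, add_zero]
  rw [key M hM, key M' hM']

lemma coeff_ramanujanSigma (j M : ℕ) (hM : j + 2 ≤ M) :
    coeff j ramanujanSigma = coeff j (Sser M) := by
  rw [ramanujanSigma, coeff_mk]
  have : (∑ m ∈ Finset.range (j + 2),
      (X : PowerSeries ℚ) ^ (m * (m + 1) / 2) *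
        (∏ k ∈ Finset.range m, (1 + (X : PowerSeries ℚ) ^ (k + 1)))⁻¹) = Sser (j + 2) := by
    rw [Sser]
    exact Finset.sum_congr rfl fun m _ => by rw [P]
  rw [this, coeff_Sser_stable (le_refl _) hM]

lemma key_coeff (n : ℕ) :
    coeff n (prodDistinct * ramanujanSigma) = coeff n (P (n + 1) * Sser (n + 2)) := by
  rw [PowerSeries.coeff_mul, PowerSeries.coeff_mul]
  refine Finset.sum_congr rfl fun p hp => ?_
  rw [Finset.HasAntidiagonal.mem_antidiagonal] at hp
  rw [coeff_prodDistinct p.1 (n + 1) (by omega), coeff_ramanujanSigma p.2 (n + 2) (by omega)]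

lemma expand (n : ℕ) :
    P (n + 1) * Sser (n + 2)
      = ∑ m ∈ Finset.range (n + 2), (X : PowerSeries ℚ) ^ (m * (m + 1) / 2) *
          ∏ k ∈ Finset.Ico m (n + 1), (1 + (X : PowerSeries ℚ) ^ (k + 1)) := by
  rw [Sser, Finset.mul_sum]
  refine Finset.sum_congr rfl fun m hm => ?_
  rw [Finset.mem_range] at hm
  have hsplit : P (n + 1) = P m * ∏ k ∈ Finset.Ico m (n + 1), (1 + (X : PowerSeries ℚ) ^ (k + 1)) := by
    rw [P, P, Finset.prod_range_mul_prod_Ico _ (by omega : m ≤ n + 1)]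
  rw [hsplit]
  have hinv : (P m)⁻¹ * P m = 1 := PowerSeries.inv_mul_cancel _ (by rw [constP]; norm_num)
  calc P m * (∏ k ∈ Finset.Ico m (n + 1), (1 + (X : PowerSeries ℚ) ^ (k + 1))) *
        ((X : PowerSeries ℚ) ^ (m * (m + 1) / 2) * (P m)⁻¹)
      = (X : PowerSeries ℚ) ^ (m * (m + 1) / 2) * (((P m)⁻¹ * P m) *
          ∏ k ∈ Finset.Ico m (n + 1), (1 + (X : PowerSeries ℚ) ^ (k + 1))) := by ring
    _ = _ := by rw [hinv, one_mul]

lemma coeff_rhs (n : ℕ) :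
    coeff n (prodDistinct * ramanujanSigma)
      = ∑ m ∈ Finset.range (n + 2),
          (((Finset.Ico m (n + 1)).powerset.filter
            fun T => m * (m + 1) / 2 + ∑ k ∈ T, (k + 1) = n).card : ℚ) := by
  rw [key_coeff, expand, map_sum]
  exact Finset.sum_congr rfl fun m _ => coeff_X_pow_mul_prod _ _ _




lemma mem_Dpart {n : ℕ} {S : Finset ℕ} :
    S ∈ Dpart n ↔ S ⊆ Finset.Icc 1 n ∧ S.sum id = n := by
  rw [Dpart, Finset.mem_filter, Finset.mem_powerset]

lemma pmex_eq {n : ℕ} {S : Finset ℕ} (hS : S ∈ Dpart n) :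
    pmex S = ((Finset.range (n + 2)).filter fun m => Finset.Icc 1 m ⊆ S).card := by
  rw [mem_Dpart] at hS
  obtain ⟨hsub, hsum⟩ := hS
  have hne : (n + 1) ∈ {m : ℕ | 0 < m ∧ m ∉ S} := by
    refine ⟨Nat.succ_pos n, fun h => ?_⟩
    have := hsub h
    rw [Finset.mem_Icc] at this
    omega
  have hp : pmex S ∈ {m : ℕ | 0 < m ∧ m ∉ S} := Nat.sInf_mem ⟨_, hne⟩
  have hple : pmex S ≤ n + 1 := Nat.sInf_le hne
  have : ((Finset.range (n + 2)).filter fun m => Finset.Icc 1 m ⊆ S)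
      = Finset.range (pmex S) := by
    ext m
    rw [Finset.mem_filter, Finset.mem_range, Finset.mem_range]
    constructor
    · rintro ⟨_, hsubm⟩
      by_contra hc
      push_neg at hc
      exact hp.2 (hsubm (Finset.mem_Icc.2 ⟨hp.1, hc⟩))
    · intro hm
      refine ⟨by omega, fun t ht => ?_⟩
      rw [Finset.mem_Icc] at ht
      by_contra htS
      have : pmex S ≤ t := Nat.sInf_le ⟨by omega, htS⟩
      omega
  rw [this, Finset.card_range]

lemma card_bij_lemma (n m : ℕ) :
    ((Dpart n).filter fun S => Finset.Icc 1 m ⊆ S).card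
      = ((Finset.Ico m (n + 1)).powerset.filter
          fun T => m * (m + 1) / 2 + ∑ k ∈ T, (k + 1) = n).card := by
  refine Finset.card_nbij' (fun S => (S \ Finset.Icc 1 m).image (· - 1))
    (fun T => Finset.Icc 1 m ∪ T.image (· + 1)) ?_ ?_ ?_ ?_
  · -- maps to
    intro S hS
    rw [Finset.mem_coe, Finset.mem_filter] at hS
    obtain ⟨hD, hmS⟩ := hS
    rw [mem_Dpart] at hD
    obtain ⟨hsub, hsum⟩ := hD
    have hbig : ∀ s ∈ S \ Finset.Icc 1 m, m + 1 ≤ s ∧ s ≤ n := by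
      intro s hs
      rw [Finset.mem_sdiff, Finset.mem_Icc] at hs
      have := hsub hs.1
      rw [Finset.mem_Icc] at this
      omega
    rw [Finset.mem_coe, Finset.mem_filter, Finset.mem_powerset]
    constructor
    · intro x hx
      rw [Finset.mem_image] at hx
      obtain ⟨s, hs, rfl⟩ := hx
      have := hbig s hs
      rw [Finset.mem_Ico]
      omega
    · have hinj : ∀ a ∈ S \ Finset.Icc 1 m, ∀ b ∈ S \ Finset.Icc 1 m, a - 1 = b - 1 → a = b := by
        intro a ha b hb hab
        have h1 := hbig a ha; have h2 := hbig b hb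
        omega
      rw [Finset.sum_image hinj]
      have heq : ∀ s ∈ S \ Finset.Icc 1 m, (s - 1) + 1 = s := fun s hs => by
        have := hbig s hs; omega
      rw [Finset.sum_congr rfl heq]
      have h2 := Finset.sum_sdiff (f := id) hmS
      simp only [id_eq] at h2 hsum
      rw [← sum_Icc_one m]
      omega
  · -- inverse maps to
    intro T hT
    rw [Finset.mem_coe, Finset.mem_filter, Finset.mem_powerset] at hT
    obtain ⟨hsub, hsum⟩ := hT
    have hmn : m ≤ n := by have := m_le_tri m; omega
    have hel : ∀ x ∈ T.image (· + 1), m + 1 ≤ x ∧ x ≤ n := by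
      intro x hx
      rw [Finset.mem_image] at hx
      obtain ⟨k, hk, rfl⟩ := hx
      have hk' := hsub hk
      rw [Finset.mem_Ico] at hk'
      have : k + 1 ≤ ∑ k ∈ T, (k + 1) :=
        Finset.single_le_sum (f := fun k => k + 1) (fun _ _ => Nat.zero_le _) hk
      omega
    have hdisj : Disjoint (Finset.Icc 1 m) (T.image (· + 1)) := by
      rw [Finset.disjoint_left]
      intro x hx hx'
      rw [Finset.mem_Icc] at hx
      have := hel x hx'
      omega
    rw [Finset.mem_coe, Finset.mem_filter, mem_Dpart]
    refine ⟨⟨?_, ?_⟩, Finset.subset_union_left⟩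
    · intro x hx
      rw [Finset.mem_union] at hx
      rw [Finset.mem_Icc]
      rcases hx with hx | hx
      · rw [Finset.mem_Icc] at hx; omega
      · have := hel x hx; omega
    · rw [Finset.sum_union hdisj]
      have hinj : Set.InjOn (· + 1) (T : Set ℕ) := fun a _ b _ h => by
        simp only at h; omega
      have : ∑ x ∈ T.image (· + 1), id x = ∑ k ∈ T, (k + 1) := by
        rw [Finset.sum_image hinj]; rfl
      rw [this]
      have h1 : ∑ x ∈ Finset.Icc 1 m, id x = m * (m + 1) / 2 := sum_Icc_one m
      rw [h1, hsum]
  · -- left inverse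
    intro S hS
    rw [Finset.mem_coe, Finset.mem_filter] at hS
    obtain ⟨hD, hmS⟩ := hS
    rw [mem_Dpart] at hD
    have hge : ∀ s ∈ S \ Finset.Icc 1 m, 1 ≤ s := by
      intro s hs
      rw [Finset.mem_sdiff] at hs
      have := hD.1 hs.1
      rw [Finset.mem_Icc] at this
      omega
    dsimp only
    rw [Finset.image_image]
    have : (S \ Finset.Icc 1 m).image ((· + 1) ∘ (· - 1)) = S \ Finset.Icc 1 m := by
      rw [Finset.image_congr (g := id) ?_, Finset.image_id]
      intro s hs
      have := hge s hs
      simp only [Function.comp_apply, id_eq]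
      omega
    rw [this, Finset.union_sdiff_of_subset hmS]
  · -- right inverse
    intro T hT
    rw [Finset.mem_coe, Finset.mem_filter, Finset.mem_powerset] at hT
    have hdisj : Disjoint (Finset.Icc 1 m) (T.image (· + 1)) := by
      rw [Finset.disjoint_left]
      intro x hx hx'
      rw [Finset.mem_Icc] at hx
      rw [Finset.mem_image] at hx'
      obtain ⟨k, hk, rfl⟩ := hx'
      have := hT.1 hk
      rw [Finset.mem_Ico] at this
      omega
    dsimp only
    rw [Finset.union_sdiff_cancel_left hdisj, Finset.image_image]
    rw [Finset.image_congr (g := id) ?_, Finset.image_id]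
    intro k _
    simp only [Function.comp_apply, id_eq]
    omega

lemma sigmadmex_eq (n : ℕ) :
    sigmadmex n = ∑ m ∈ Finset.range (n + 2),
      ((Finset.Ico m (n + 1)).powerset.filter
        fun T => m * (m + 1) / 2 + ∑ k ∈ T, (k + 1) = n).card := by
  rw [sigmadmex]
  calc ∑ S ∈ Dpart n, pmex S
      = ∑ S ∈ Dpart n, ((Finset.range (n + 2)).filter fun m => Finset.Icc 1 m ⊆ S).card :=
        Finset.sum_congr rfl fun S hS => pmex_eq hS
    _ = ∑ S ∈ Dpart n, ∑ m ∈ Finset.range (n + 2), if Finset.Icc 1 m ⊆ S then 1 else 0 :=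
        Finset.sum_congr rfl fun S _ => Finset.card_filter _ _
    _ = ∑ m ∈ Finset.range (n + 2), ∑ S ∈ Dpart n, if Finset.Icc 1 m ⊆ S then 1 else 0 :=
        Finset.sum_comm
    _ = ∑ m ∈ Finset.range (n + 2), ((Dpart n).filter fun S => Finset.Icc 1 m ⊆ S).card :=
        Finset.sum_congr rfl fun m _ => (Finset.card_filter _ _).symm
    _ = _ := Finset.sum_congr rfl fun m _ => card_bij_lemma n m

theorem stmt_4' :
    (PowerSeries.mk fun n => (sigmadmex n : ℚ)) = prodDistinct * ramanujanSigma := by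
  ext n
  rw [coeff_mk, coeff_rhs, sigmadmex_eq]
  push_cast
  rfl

end Aux4

/-- `Σ_{n≥0} σ_d mex(n) q^n = (−q;q)_∞ · σ(q)`. -/
theorem stmt_4 :
    (PowerSeries.mk fun n => (sigmadmex n : ℚ)) = prodDistinct * ramanujanSigma :=
  Aux4.stmt_4'
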